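/- Let S be an integral domain with field of fractions H, let D be a nonzero torsion-free divisible S-module, and let R = S ⋉ D be the idealization (trivial extension). Then an element (s, d) of R is a zero-divisor if and only if s = 0, and for every regular element r = (s, d) of R with s ≠ 0, the principal ideal rR equals (sS) ⊕ D, so that R/rR ≅ S/sS as rings. -/

import Mathlib

open TrivSqZeroExt

theorem stmt_9 {S : Type*} [CommRing S] [IsDomain S]
    {D : Type*} [AddCommGroup D] [Module S D] [Module Sᵐᵒᵖ D] [IsCentralScalar S D]
    (hD0 : Nontrivial D)
    (htf : ∀ (s : S) (d : D), s • d = 0 → s = 0 ∨ d = 0)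
    (hdiv : ∀ s : S, s ≠ 0 → ∀ d : D, ∃ d' : D, s • d' = d) :
    (∀ z : TrivSqZeroExt S D, z ∉ nonZeroDivisors (TrivSqZeroExt S D) ↔ fst z = 0) ∧
    (∀ r : TrivSqZeroExt S D, fst r ≠ 0 →
      (∀ z : TrivSqZeroExt S D,
        z ∈ Ideal.span {r} ↔ fst z ∈ Ideal.span {fst r}) ∧
      Nonempty ((TrivSqZeroExt S D ⧸ (Ideal.span {r} : Ideal (TrivSqZeroExt S D))) ≃+*
        (S ⧸ (Ideal.span {fst r} : Ideal S)))) := by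
  constructor
  · intro z
    constructor
    · intro hz
      by_contra hs
      apply hz
      rw [mem_nonZeroDivisors_iff_right]
      intro x hx
      have h1 : fst x * fst z = 0 := by rw [← fst_mul, hx, fst_zero]
      have hx1 : fst x = 0 := by
        rcases mul_eq_zero.mp h1 with h | h
        · exact h
        · exact absurd h hs
      have h2 : snd (x * z) = 0 := by rw [hx, snd_zero]
      rw [snd_mul, hx1, zero_smul, zero_add, op_smul_eq_smul] at h2
      have hx2 : snd x = 0 := by
        rcases htf (fst z) (snd x) h2 with h | h
        · exact absurd h hs
        · exact h
      ext
      · exact hx1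
      · exact hx2
    · intro hz hmem
      obtain ⟨a, b, hab⟩ := hD0
      have hd0 : a - b ≠ 0 := sub_ne_zero.mpr hab
      have hxz : (inr (a - b) : TrivSqZeroExt S D) * z = 0 := by
        ext
        · simp
        · simp [hz]
      have := mem_nonZeroDivisors_iff_right.mp hmem (inr (a - b)) hxz
      apply hd0
      have := congrArg snd this
      simpa using this
  · intro r hr
    have key : ∀ z : TrivSqZeroExt S D,
        z ∈ Ideal.span {r} ↔ fst z ∈ Ideal.span {fst r} := by
      intro z
      rw [Ideal.mem_span_singleton, Ideal.mem_span_singleton]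
      constructor
      · rintro ⟨c, rfl⟩
        exact ⟨fst c, by rw [fst_mul]⟩
      · rintro ⟨t, ht⟩
        obtain ⟨e, he⟩ := hdiv (fst r) hr (snd z - t • snd r)
        refine ⟨inl t + inr e, ?_⟩
        ext
        · rw [fst_mul, fst_add, fst_inl, fst_inr, add_zero]; exact ht
        · rw [snd_mul, op_smul_eq_smul, snd_add, snd_inl, snd_inr, zero_add, fst_add, fst_inl, fst_inr,
            add_zero]
          show snd z = fst r • e + t • snd r
          rw [he]; abel
    refine ⟨key, ?_⟩
    let φ : TrivSqZeroExt S D →+* S ⧸ Ideal.span {fst r} :=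
      (Ideal.Quotient.mk _).comp (fstHom S S D).toRingHom
    have hsurj : Function.Surjective φ := by
      intro a
      obtain ⟨s, rfl⟩ := Ideal.Quotient.mk_surjective a
      exact ⟨inl s, rfl⟩
    have hker : RingHom.ker φ = Ideal.span {r} := by
      ext z
      rw [RingHom.mem_ker, key]
      simp [φ, Ideal.Quotient.eq_zero_iff_mem]
    exact ⟨(Ideal.quotEquivOfEq hker.symm).trans
      (RingHom.quotientKerEquivOfSurjective hsurj)⟩
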